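/- If X ∈ ℝ^{N×N} has all entries nonnegative, then Φ(X) has all entries nonnegative. -/

import Mathlib

open Matrix BigOperators

/-- The linear map `Φ(X) = P_q X P_qᵀ + q²(Ψ⁻(P·Ψ(X)) − Ψ⁻(Ψ(P X Pᵀ)))`,
where `P_q = (1−q)I + qP`. -/
noncomputable def Phi {N : ℕ} (P : Matrix (Fin N) (Fin N) ℝ) (q : ℝ)
    (X : Matrix (Fin N) (Fin N) ℝ) : Matrix (Fin N) (Fin N) ℝ :=
  ((1 - q) • (1 : Matrix (Fin N) (Fin N) ℝ) + q • P) * X *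
      ((1 - q) • (1 : Matrix (Fin N) (Fin N) ℝ) + q • P)ᵀ
    + q ^ 2 •
        (Matrix.diagonal (P *ᵥ Matrix.diag X)
          - Matrix.diagonal (Matrix.diag (P * X * Pᵀ)))

/-- The diagonal entries of `Φ(X)` simplify nicely: the `q²`-terms cancel the
`q²`-part of the product `P_q X P_qᵀ`. -/
lemma Phi_diag_eq {N : ℕ} (P : Matrix (Fin N) (Fin N) ℝ) (q : ℝ)
    (X : Matrix (Fin N) (Fin N) ℝ) (k : Fin N) :
    Phi P q X k k
      = (1 - q) ^ 2 * X k k + (q * (1 - q)) * (∑ j, P k j * (X k j + X j k))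
          + q ^ 2 * ∑ j, P k j * X j j := by
  simp only [Phi, Matrix.add_apply, Matrix.mul_apply, Matrix.smul_apply, Matrix.sub_apply,
    Matrix.diagonal_apply_eq, Matrix.mulVec, dotProduct, Matrix.diag, Matrix.transpose_apply,
    Matrix.one_apply, smul_eq_mul, mul_ite, mul_one, mul_zero, ite_mul, zero_mul,
    Finset.sum_ite_eq, Finset.mem_univ, if_true, add_mul, mul_add,
    Finset.sum_add_distrib, Finset.mul_sum]
  simp only [Finset.sum_mul, Finset.mul_sum]
  ring_nf
  have s1 : ∑ x : Fin N, (q * X k x * P k x - q ^ 2 * X k x * P k x)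
      = ∑ x : Fin N, (q - q ^ 2) * P k x * X k x :=
    Finset.sum_congr rfl (fun x _ => by ring)
  have s2 : ∑ x : Fin N, q * P k x * X x k * (1 - q)
      = ∑ x : Fin N, (q - q ^ 2) * P k x * X x k :=
    Finset.sum_congr rfl (fun x _ => by ring)
  have s3 : ∑ x : Fin N, ∑ x_1 : Fin N, q * P k x_1 * X x_1 x * q * P k x
      = q ^ 2 * ∑ x : Fin N, ∑ i : Fin N, P k i * X i x * P k x := by
    rw [Finset.mul_sum]
    exact Finset.sum_congr rfl fun x _ => by
      rw [Finset.mul_sum]; exact Finset.sum_congr rfl fun i _ => by ring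
  have s4 : q ^ 2 * ∑ x : Fin N, P k x * X x x = ∑ x : Fin N, q ^ 2 * P k x * X x x := by
    rw [Finset.mul_sum]; exact Finset.sum_congr rfl fun x _ => by ring
  rw [s1, s4]; simp only [sub_mul, Finset.sum_sub_distrib, Finset.mul_sum]
  ring_nf
  have s5 : ∑ x : Fin N, ∑ y : Fin N, q ^ 2 * P k x * P k y * X y x
      = ∑ x : Fin N, ∑ y : Fin N, q ^ 2 * P k y * X y x * P k x :=
    Finset.sum_congr rfl fun x _ => Finset.sum_congr rfl fun y _ => by ring
  rw [s5]
  ring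

/-- `Φ` preserves entrywise nonnegativity. -/
theorem stmt4 (N : ℕ) (hN : 1 ≤ N) (P : Matrix (Fin N) (Fin N) ℝ)
    (hPnonneg : ∀ i j, 0 ≤ P i j) (hProw : ∀ i, ∑ j, P i j = 1)
    (q : ℝ) (hq0 : 0 ≤ q) (hq1 : q ≤ 1)
    (X : Matrix (Fin N) (Fin N) ℝ) (hX : ∀ k l, 0 ≤ X k l) :
    ∀ k l, 0 ≤ Phi P q X k l := by
  have hq1' : 0 ≤ 1 - q := by linarith
  have hA : ∀ i j, 0 ≤ (((1 - q) • (1 : Matrix (Fin N) (Fin N) ℝ) + q • P)) i j := by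
    intro i j
    simp only [Matrix.add_apply, Matrix.smul_apply, Matrix.one_apply, smul_eq_mul]
    by_cases h : i = j
    · simp only [h, if_pos rfl, mul_one]
      have := mul_nonneg hq0 (hPnonneg j j); simp [h]; nlinarith [hPnonneg j j]
    · simp [h]; exact mul_nonneg hq0 (hPnonneg i j)
  intro k l
  by_cases hkl : k = l
  · subst hkl
    rw [Phi_diag_eq]
    have h1 : 0 ≤ (1 - q) ^ 2 * X k k := mul_nonneg (sq_nonneg _) (hX k k)
    have h2 : 0 ≤ ∑ j, P k j * (X k j + X j k) :=
      Finset.sum_nonneg fun j _ =>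
        mul_nonneg (hPnonneg k j) (add_nonneg (hX k j) (hX j k))
    have h3 : 0 ≤ ∑ j, P k j * X j j :=
      Finset.sum_nonneg fun j _ => mul_nonneg (hPnonneg k j) (hX j j)
    have h2' : 0 ≤ (q * (1 - q)) * (∑ j, P k j * (X k j + X j k)) :=
      mul_nonneg (mul_nonneg hq0 hq1') h2
    have h3' : 0 ≤ q ^ 2 * ∑ j, P k j * X j j := mul_nonneg (by positivity) h3
    linarith
  · have : Phi P q X k l
        = (((1 - q) • (1 : Matrix (Fin N) (Fin N) ℝ) + q • P) * X *
            ((1 - q) • (1 : Matrix (Fin N) (Fin N) ℝ) + q • P)ᵀ) k l := by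
      simp [Phi, Matrix.diagonal_apply_ne _ hkl]
    rw [this, Matrix.mul_apply]
    refine Finset.sum_nonneg fun j _ => ?_
    rw [Matrix.mul_apply, Matrix.transpose_apply]
    exact mul_nonneg (Finset.sum_nonneg fun i _ => mul_nonneg (hA k i) (hX i j)) (hA l j)
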